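/- Let (J,M) be an instance of P||C_max with machines labeled 1,…,m and let T ∈ ℕ. Define the directed graph G_T whose vertex set is the set of pairs (J', i) with J' ⊆ J and i ∈ {1,…,m+1} such that there exists a function assigning each job of J' to a machine in {i,…,m} with every machine load at most T (with (∅, m+1) always a vertex), and with an arc from (J', i) to (J'', i+1) whenever both are vertices, J'' ⊆ J', and ∑_{j ∈ J'∖J''} p_j ≤ T. Let s = (J,1) and t = (∅, m+1). Then the map that sends a directed s–t path with vertex sequence (J'_1,1), (J'_2,2), …, (J'_{m+1}, m+1) (where J'_1 = J and J'_{m+1} = ∅) to the schedule assigning the jobs J'_i ∖ J'_{i+1} to machine i for each i ∈ {1,…,m} is a bijection between the directed s–t paths in G_T and the schedules of (J,M) with makespan at most T. -/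
import Mathlib


open Finset

noncomputable section

/-- The load of machine `i` under schedule `σ`. -/
def load {n m : ℕ} (p : Fin n → ℕ) (σ : Fin n → Fin m) (i : Fin m) : ℕ :=
  ∑ j, if σ j = i then p j else 0

/-- The makespan of a schedule: the maximum machine load. -/
def makespan {n m : ℕ} (p : Fin n → ℕ) (σ : Fin n → Fin m) : ℕ :=
  Finset.univ.sup (load p σ)

/-- `(J', i)` is a vertex of the DP graph: the jobs of `J'` can be assigned to the machines
`{i, …, m}` (machines labelled `1, …, m`) with every machine load at most `T`. -/
def IsVertex (n m T : ℕ) (p : Fin n → ℕ) (J' : Finset (Fin n)) (i : ℕ) : Prop :=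
  ∃ f : Fin n → ℕ, (∀ j ∈ J', i ≤ f j ∧ f j ≤ m) ∧
    ∀ k : ℕ, ∑ j ∈ J'.filter (fun j => f j = k), p j ≤ T

/-- An `s`–`t` path in the DP graph, recorded by its vertex sequence
`(c 1, 1), (c 2, 2), …, (c (m+1), m+1)` with `c 1 = J` and `c (m+1) = ∅`
(values of `c` outside `{1, …, m+1}` are normalized to `∅`).  Consecutive vertices must be
joined by an arc: both are vertices, `c (i+1) ⊆ c i`, and `p(c i ∖ c (i+1)) ≤ T`. -/
def IsPath (n m T : ℕ) (p : Fin n → ℕ) (c : ℕ → Finset (Fin n)) : Prop :=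
  c 1 = Finset.univ ∧ c (m + 1) = ∅ ∧
  c 0 = ∅ ∧ (∀ i, m + 1 < i → c i = ∅) ∧
  (∀ i, 1 ≤ i → i ≤ m + 1 → IsVertex n m T p (c i) i) ∧
  (∀ i, 1 ≤ i → i ≤ m →
    c (i + 1) ⊆ c i ∧ ∑ j ∈ c i \ c (i + 1), p j ≤ T)

/-- The last index `i` (in `{1,…,m+1}`) with `j ∈ c i`. -/
def lvl {n : ℕ} (m : ℕ) (c : ℕ → Finset (Fin n)) (j : Fin n) : ℕ :=
  ((Finset.range (m + 2)).filter (fun i => j ∈ c i)).sup id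

section aux

variable {n m T : ℕ} {p : Fin n → ℕ} {c : ℕ → Finset (Fin n)}

lemma chain (hc : IsPath n m T p c) :
    ∀ a b, 1 ≤ a → a ≤ b → b ≤ m + 1 → c b ⊆ c a := by
  intro a b ha hab hbm
  induction b with
  | zero => omega
  | succ b ih =>
    rcases eq_or_lt_of_le hab with rfl | h
    · exact Finset.Subset.refl _
    · exact Finset.Subset.trans (hc.2.2.2.2.2 b (by omega) (by omega)).1
        (ih (by omega) (by omega))

lemma one_mem_S (hc : IsPath n m T p c) (j : Fin n) :
    1 ∈ (Finset.range (m + 2)).filter (fun i => j ∈ c i) := by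
  simp [Finset.mem_filter, Finset.mem_range, hc.1]

lemma lvl_pos (hc : IsPath n m T p c) (j : Fin n) : 1 ≤ lvl m c j :=
  Finset.le_sup (f := id) (one_mem_S hc j)

lemma lvl_le (j : Fin n) : lvl m c j ≤ m + 1 := by
  apply Finset.sup_le
  intro i hi
  simp only [Finset.mem_filter, Finset.mem_range] at hi
  simp only [id_eq]
  omega

lemma mem_c_lvl (hc : IsPath n m T p c) (j : Fin n) : j ∈ c (lvl m c j) := by
  have hne : ((Finset.range (m + 2)).filter (fun i => j ∈ c i)).Nonempty :=
    ⟨1, one_mem_S hc j⟩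
  have h := Finset.max'_mem _ hne
  have heq : ((Finset.range (m + 2)).filter (fun i => j ∈ c i)).max' hne = lvl m c j := by
    rw [Finset.max'_eq_sup', Finset.sup'_eq_sup]
    rfl
  rw [heq] at h
  exact (Finset.mem_filter.1 h).2

lemma lvl_le_m (hc : IsPath n m T p c) (j : Fin n) : lvl m c j ≤ m := by
  have h1 := mem_c_lvl hc j
  have h2 := lvl_le (m := m) (c := c) j
  by_contra h
  have he : lvl m c j = m + 1 := by omega
  rw [he, hc.2.1] at h1
  exact absurd h1 (Finset.notMem_empty j)

lemma mem_iff_le_lvl (hc : IsPath n m T p c) (j : Fin n) {i : ℕ}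
    (h1 : 1 ≤ i) (h2 : i ≤ m + 1) : j ∈ c i ↔ i ≤ lvl m c j := by
  constructor
  · intro h
    exact Finset.le_sup (f := id)
      (Finset.mem_filter.2 ⟨Finset.mem_range.2 (by omega), h⟩)
  · intro h
    exact chain hc i (lvl m c j) h1 h (lvl_le j) (mem_c_lvl hc j)

/-- The schedule associated to a path. -/
def toSched (c : {c : ℕ → Finset (Fin n) // IsPath n m T p c}) (j : Fin n) : Fin m :=
  ⟨lvl m c.1 j - 1, by
    have h1 := lvl_pos c.2 j
    have h2 := lvl_le_m c.2 j
    omega⟩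

lemma toSched_val (c : {c : ℕ → Finset (Fin n) // IsPath n m T p c}) (j : Fin n) :
    (toSched c j : ℕ) = lvl m c.1 j - 1 := rfl

lemma load_eq (σ : Fin n → Fin m) (i : Fin m) :
    load p σ i = ∑ j ∈ Finset.univ.filter (fun j => σ j = i), p j := by
  rw [load, Finset.sum_filter]

lemma load_le_of_makespan {σ : Fin n → Fin m} (h : makespan p σ ≤ T) (k : Fin m) :
    load p σ k ≤ T :=
  le_trans (Finset.le_sup (Finset.mem_univ k)) h

lemma fiber (c : {c : ℕ → Finset (Fin n) // IsPath n m T p c}) (k : Fin m) :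
    Finset.univ.filter (fun j => toSched c j = k) = c.1 ((k : ℕ) + 1) \ c.1 ((k : ℕ) + 2) := by
  ext j
  have h1 := lvl_pos c.2 j
  have hm := lvl_le_m c.2 j
  have hk := k.2
  simp only [Finset.mem_filter, Finset.mem_univ, true_and, Finset.mem_sdiff]
  constructor
  · intro h
    have hv : lvl m c.1 j - 1 = (k : ℕ) := congrArg Fin.val h
    have hkl : lvl m c.1 j = (k : ℕ) + 1 := by omega
    refine ⟨by rw [← hkl]; exact mem_c_lvl c.2 j, ?_⟩
    rw [mem_iff_le_lvl c.2 j (by omega) (by omega)]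
    omega
  · rintro ⟨ha, hb⟩
    have hk1 : (k : ℕ) + 1 ≤ lvl m c.1 j :=
      (mem_iff_le_lvl c.2 j (by omega) (by omega)).1 ha
    have hk2 : ¬ ((k : ℕ) + 2 ≤ lvl m c.1 j) := fun hh =>
      hb ((mem_iff_le_lvl c.2 j (by omega) (by omega)).2 hh)
    apply Fin.ext
    show lvl m c.1 j - 1 = (k : ℕ)
    omega

/-- `Φ`: from paths to schedules of makespan at most `T`. -/
def pathToSched (c : {c : ℕ → Finset (Fin n) // IsPath n m T p c}) :
    {σ : Fin n → Fin m // makespan p σ ≤ T} := by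
  refine ⟨toSched c, ?_⟩
  apply Finset.sup_le
  intro k _
  rw [load_eq, fiber c k]
  have hk := k.2
  have := (c.2.2.2.2.2.2 ((k : ℕ) + 1) (by omega) (by omega)).2
  simpa using this

/-- `Ψ`: from schedules to paths. -/
def ofSched (m : ℕ) (σ : Fin n → Fin m) (i : ℕ) : Finset (Fin n) :=
  if 1 ≤ i ∧ i ≤ m + 1 then Finset.univ.filter (fun j => i ≤ (σ j : ℕ) + 1) else ∅

lemma mem_ofSched {σ : Fin n → Fin m} {i : ℕ} {j : Fin n} :
    j ∈ ofSched m σ i ↔ 1 ≤ i ∧ i ≤ m + 1 ∧ i ≤ (σ j : ℕ) + 1 := by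
  unfold ofSched
  split
  · simp only [Finset.mem_filter, Finset.mem_univ, true_and]
    tauto
  · simp only [Finset.notMem_empty, false_iff]
    tauto

lemma sdiff_ofSched {σ : Fin n → Fin m} {i : ℕ} (h1 : 1 ≤ i) (h2 : i ≤ m)
    (hi : i - 1 < m) :
    ofSched m σ i \ ofSched m σ (i + 1) = Finset.univ.filter (fun j => σ j = ⟨i - 1, hi⟩) := by
  ext j
  have hj := (σ j).2
  simp only [Finset.mem_sdiff, mem_ofSched, Finset.mem_filter, Finset.mem_univ, true_and,
    Fin.ext_iff]
  constructor
  · rintro ⟨⟨_, _, ha⟩, hb⟩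
    simp only [not_and] at hb
    have := hb (by omega) (by omega)
    show (σ j : ℕ) = i - 1
    omega
  · intro h
    have : (σ j : ℕ) = i - 1 := h
    refine ⟨⟨h1, by omega, by omega⟩, ?_⟩
    simp only [not_and]
    intro _ _
    omega

lemma isPath_ofSched {σ : Fin n → Fin m} (h : makespan p σ ≤ T) :
    IsPath n m T p (ofSched m σ) := by
  refine ⟨?_, ?_, ?_, ?_, ?_, ?_⟩
  · ext j; simp [mem_ofSched]
  · ext j
    have := (σ j).2
    simp only [mem_ofSched, Finset.notMem_empty, iff_false, not_and]
    intro _ _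
    omega
  · simp [ofSched]
  · intro i hi; simp [ofSched]; omega
  · intro i hi1 hi2
    refine ⟨fun j => (σ j : ℕ) + 1, ?_, ?_⟩
    · intro j hj
      rw [mem_ofSched] at hj
      have := (σ j).2
      dsimp only
      omega
    · intro k
      by_cases hk : 1 ≤ k ∧ k ≤ m
      · have hkm : k - 1 < m := by omega
        have hsub : (ofSched m σ i).filter (fun j => (σ j : ℕ) + 1 = k) ⊆
            Finset.univ.filter (fun j => σ j = ⟨k - 1, hkm⟩) := by
          intro j hj
          simp only [Finset.mem_filter] at hj ⊢
          refine ⟨Finset.mem_univ j, Fin.ext ?_⟩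
          show (σ j : ℕ) = k - 1
          omega
        calc ∑ j ∈ (ofSched m σ i).filter (fun j => (σ j : ℕ) + 1 = k), p j
            ≤ ∑ j ∈ Finset.univ.filter (fun j => σ j = ⟨k - 1, hkm⟩), p j :=
              Finset.sum_le_sum_of_subset hsub
          _ = load p σ ⟨k - 1, hkm⟩ := (load_eq σ _).symm
          _ ≤ T := load_le_of_makespan h _
      · have : (ofSched m σ i).filter (fun j => (σ j : ℕ) + 1 = k) = ∅ := by
          apply Finset.filter_eq_empty_iff.2
          intro j hj
          have := (σ j).2
          omega
        rw [this]
        simp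
  · intro i hi1 hi2
    constructor
    · intro j hj
      rw [mem_ofSched] at hj ⊢
      omega
    · have hkm : i - 1 < m := by omega
      rw [sdiff_ofSched hi1 hi2 hkm, ← load_eq]
      exact load_le_of_makespan h _

lemma lvl_ofSched (σ : Fin n → Fin m) (j : Fin n) :
    lvl m (ofSched m σ) j = (σ j : ℕ) + 1 := by
  have hj := (σ j).2
  apply le_antisymm
  · apply Finset.sup_le
    intro i hi
    simp only [Finset.mem_filter, Finset.mem_range, mem_ofSched] at hi
    show i ≤ (σ j : ℕ) + 1
    omega
  · exact Finset.le_sup (f := id)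
      (Finset.mem_filter.2 ⟨Finset.mem_range.2 (by omega),
        mem_ofSched.2 ⟨by omega, by omega, le_refl _⟩⟩)

end aux

/-- The map sending an `s`–`t` path `(J'_1,1), …, (J'_{m+1},m+1)` of the DP graph to the
schedule that assigns the jobs `J'_i ∖ J'_{i+1}` to machine `i` is a bijection between the
`s`–`t` paths and the schedules of makespan at most `T`.  (Machine `i ∈ {1, …, m}` is
represented by the element of `Fin m` with value `i − 1`.) -/
theorem dp_paths_biject_schedules (n m T : ℕ) (p : Fin n → ℕ) :
    ∃ Φ : {c : ℕ → Finset (Fin n) // IsPath n m T p c} →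
          {σ : Fin n → Fin m // makespan p σ ≤ T},
      Function.Bijective Φ ∧
      ∀ (c : {c : ℕ → Finset (Fin n) // IsPath n m T p c}) (j : Fin n),
        j ∈ c.1 (((Φ c).1 j : ℕ) + 1) \ c.1 (((Φ c).1 j : ℕ) + 2) := by
  refine ⟨pathToSched, ?_, ?_⟩
  · rw [Function.bijective_iff_has_inverse]
    refine ⟨fun s => ⟨ofSched m s.1, isPath_ofSched s.2⟩, ?_, ?_⟩
    · intro c
      apply Subtype.ext
      funext i
      show ofSched m (toSched c) i = c.1 i
      by_cases hi : 1 ≤ i ∧ i ≤ m + 1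
      · ext j
        have h1 := lvl_pos c.2 j
        rw [mem_ofSched, mem_iff_le_lvl c.2 j hi.1 hi.2, toSched_val]
        omega
      · rw [ofSched, if_neg hi]
        rcases Nat.lt_or_ge i 1 with h | h
        · have : i = 0 := by omega
          rw [this, c.2.2.2.1]
        · rw [c.2.2.2.2.1 i (by omega)]
    · intro s
      apply Subtype.ext
      funext j
      apply Fin.ext
      show lvl m (ofSched m s.1) j - 1 = (s.1 j : ℕ)
      rw [lvl_ofSched]
      omega
  · intro c j
    have h1 := lvl_pos c.2 j
    have h2 := lvl_le_m c.2 j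
    have hv : ((pathToSched c).1 j : ℕ) = lvl m c.1 j - 1 := rfl
    rw [Finset.mem_sdiff, hv]
    constructor
    · have : lvl m c.1 j - 1 + 1 = lvl m c.1 j := by omega
      rw [this]
      exact mem_c_lvl c.2 j
    · have he : lvl m c.1 j - 1 + 2 = lvl m c.1 j + 1 := by omega
      rw [he, mem_iff_le_lvl c.2 j (by omega) (by omega)]
      omega
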